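/- Let P and Q be probability measures with P ≪ Q, β₂ = ess inf dP/dQ > 0, and let X ∼ P. For the convex function f(t) = −ln t: β₂·D(Q‖P) ≤ ln(1 + χ²(P‖Q)) − D(P‖Q) ≤ (1/β₁)·D(Q‖P), where β₁ = (ess sup dP/dQ)⁻¹ ∈ (0,1). -/

import Mathlib

open MeasureTheory Set

private lemma intOfBound {α : Type*} [MeasurableSpace α] {Q : Measure α} [IsFiniteMeasure Q]
    {f : α → ℝ} (hf : AEStronglyMeasurable f Q) (C : ℝ) (h : ∀ᵐ x ∂Q, |f x| ≤ C) :
    Integrable f Q :=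
  (integrable_const C).mono' hf (by simpa [Real.norm_eq_abs] using h)

private lemma weightedLogLe {α : Type*} [MeasurableSpace α] {Q : Measure α}
    [IsProbabilityMeasure Q] {w r : α → ℝ} {a : ℝ} (ha : 0 < a)
    (hw_nonneg : ∀ᵐ x ∂Q, 0 ≤ w x) (hr_pos : ∀ᵐ x ∂Q, 0 < r x)
    (hint_w : Integrable w Q) (hint_wr : Integrable (fun x => w x * r x) Q)
    (hint_wlog : Integrable (fun x => w x * Real.log (r x)) Q)
    (hA : ∫ x, w x * r x ∂Q = a * ∫ x, w x ∂Q) :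
    ∫ x, w x * Real.log (r x) ∂Q ≤ (∫ x, w x ∂Q) * Real.log a := by
  have key : ∀ᵐ x ∂Q, w x * Real.log (r x)
      ≤ (Real.log a - 1) * w x + a⁻¹ * (w x * r x) := by
    filter_upwards [hw_nonneg, hr_pos] with x hwx hrx
    have h1 : Real.log (r x / a) ≤ r x / a - 1 :=
      Real.log_le_sub_one_of_pos (div_pos hrx ha)
    rw [Real.log_div hrx.ne' ha.ne'] at h1
    have h2 : Real.log (r x) ≤ Real.log a - 1 + a⁻¹ * r x := by
      rw [div_eq_inv_mul] at h1; linarith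
    nlinarith [mul_le_mul_of_nonneg_left h2 hwx]
  have hint1 : Integrable (fun x => (Real.log a - 1) * w x) Q := hint_w.const_mul _
  have hint2 : Integrable (fun x => a⁻¹ * (w x * r x)) Q := hint_wr.const_mul _
  have hint_rhs : Integrable (fun x => (Real.log a - 1) * w x + a⁻¹ * (w x * r x)) Q :=
    hint1.add hint2
  have ha' : a ≠ 0 := ha.ne'
  calc ∫ x, w x * Real.log (r x) ∂Q
      ≤ ∫ x, ((Real.log a - 1) * w x + a⁻¹ * (w x * r x)) ∂Q :=
        integral_mono_ae hint_wlog hint_rhs key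
    _ = (Real.log a - 1) * ∫ x, w x ∂Q + a⁻¹ * ∫ x, w x * r x ∂Q := by
        rw [integral_add hint1 hint2, integral_const_mul, integral_const_mul]
    _ = (∫ x, w x ∂Q) * Real.log a := by
        rw [hA]; field_simp; ring

theorem log_one_add_chiSq_sub_relEntropy_bounds {α : Type*} [MeasurableSpace α]
    (P Q : Measure α) [IsProbabilityMeasure P] [IsProbabilityMeasure Q]
    (hPQ : P ≪ Q) (hQP : Q ≪ P)
    (hM : 1 < essSup (P.rnDeriv Q) Q) (hM' : essSup (P.rnDeriv Q) Q ≠ ⊤)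
    (hm0 : 0 < essInf (P.rnDeriv Q) Q) (hm1 : essInf (P.rnDeriv Q) Q < 1) :
    (essInf (P.rnDeriv Q) Q).toReal * ∫ x, Real.log ((Q.rnDeriv P x).toReal) ∂Q
        ≤ Real.log (1 + ∫ x, ((P.rnDeriv Q x).toReal - 1) ^ 2 ∂Q)
            - ∫ x, Real.log ((P.rnDeriv Q x).toReal) ∂P
      ∧ Real.log (1 + ∫ x, ((P.rnDeriv Q x).toReal - 1) ^ 2 ∂Q)
            - ∫ x, Real.log ((P.rnDeriv Q x).toReal) ∂P
        ≤ (essSup (P.rnDeriv Q) Q).toReal * ∫ x, Real.log ((Q.rnDeriv P x).toReal) ∂Q := by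
  set r : α → ℝ := fun x => (P.rnDeriv Q x).toReal with hrdef
  have hr_meas : Measurable r := (Measure.measurable_rnDeriv P Q).ennreal_toReal
  set m : ℝ := (essInf (P.rnDeriv Q) Q).toReal with hmdef
  set M : ℝ := (essSup (P.rnDeriv Q) Q).toReal with hMdef
  have hmI_ne_top : essInf (P.rnDeriv Q) Q ≠ ⊤ := ne_top_of_lt hm1
  have hm_pos : 0 < m := ENNReal.toReal_pos hm0.ne' hmI_ne_top
  have hm_lt1 : m < 1 := by
    have := (ENNReal.toReal_lt_toReal hmI_ne_top (by simp)).mpr hm1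
    simpa using this
  have hM_gt1 : 1 < M := by
    have := (ENNReal.toReal_lt_toReal (by simp) hM').mpr hM
    simpa using this
  have hM_pos : 0 < M := by linarith
  have hM0 : M ≠ 0 := hM_pos.ne'
  have hM1 : M - 1 ≠ 0 := ne_of_gt (by linarith)
  have h1m : (1:ℝ) - m ≠ 0 := ne_of_gt (by linarith)
  have hub : ∀ᵐ x ∂Q, r x ≤ M := by
    filter_upwards [ae_le_essSup (μ := Q) (f := P.rnDeriv Q)] with x hx
    exact ENNReal.toReal_mono hM' hx
  have hlb : ∀ᵐ x ∂Q, m ≤ r x := by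
    filter_upwards [ae_essInf_le (μ := Q) (f := P.rnDeriv Q),
      Measure.rnDeriv_lt_top P Q] with x h1 h2
    exact ENNReal.toReal_mono h2.ne h1
  have hr_pos : ∀ᵐ x ∂Q, 0 < r x := by
    filter_upwards [hlb] with x hx; linarith
  -- integrability
  have hbd : ∀ (f : α → ℝ), Measurable f → ∀ (C : ℝ), (∀ᵐ x ∂Q, |f x| ≤ C) →
      Integrable f Q := fun f hf C h => intOfBound hf.aestronglyMeasurable C h
  set C₀ : ℝ := |Real.log m| + |Real.log M| with hC₀
  have hlog_bd : ∀ᵐ x ∂Q, |Real.log (r x)| ≤ C₀ := by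
    filter_upwards [hlb, hub, hr_pos] with x h1 h2 h3
    have l1 : Real.log m ≤ Real.log (r x) := Real.log_le_log hm_pos h1
    have l2 : Real.log (r x) ≤ Real.log M := Real.log_le_log h3 h2
    rw [abs_le]
    constructor
    · nlinarith [neg_abs_le (Real.log m), abs_nonneg (Real.log M)]
    · nlinarith [le_abs_self (Real.log M), abs_nonneg (Real.log m)]
  have int_r : Integrable r Q := by
    refine hbd r hr_meas M ?_
    filter_upwards [hlb, hub] with x h1 h2
    rw [abs_le]; constructor <;> nlinarith
  have int_logr : Integrable (fun x => Real.log (r x)) Q :=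
    hbd _ (Real.measurable_log.comp hr_meas) C₀ hlog_bd
  have int_rlogr : Integrable (fun x => r x * Real.log (r x)) Q := by
    refine hbd _ (hr_meas.mul (Real.measurable_log.comp hr_meas)) (M * C₀) ?_
    filter_upwards [hlb, hub, hlog_bd] with x h1 h2 h3
    rw [abs_mul]
    have hrx : |r x| ≤ M := by rw [abs_le]; constructor <;> nlinarith
    have h3' : 0 ≤ |Real.log (r x)| := abs_nonneg _
    nlinarith [abs_nonneg (r x)]
  have int_rsq : Integrable (fun x => r x * r x) Q := by
    refine hbd _ (hr_meas.mul hr_meas) (M * M) ?_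
    filter_upwards [hlb, hub] with x h1 h2
    rw [abs_mul]
    have hrx : |r x| ≤ M := by rw [abs_le]; constructor <;> nlinarith
    nlinarith [abs_nonneg (r x)]
  have int_sq : Integrable (fun x => (r x - 1) ^ 2) Q := by
    have heq : (fun x => (r x - 1) ^ 2) = fun x => r x * r x - (2 * r x - 1) := by
      funext x; ring
    have int_lin : Integrable (fun x => 2 * r x - 1) Q :=
      (int_r.const_mul 2).sub (integrable_const 1)
    rw [heq]
    exact int_rsq.sub int_lin
  have int_lin : Integrable (fun x => 2 * r x - 1) Q :=
    (int_r.const_mul 2).sub (integrable_const 1)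
  -- basic integrals
  have h_int_r : ∫ x, r x ∂Q = 1 := by
    have := Measure.integral_toReal_rnDeriv hPQ
    simpa [hrdef] using this
  set χ : ℝ := ∫ x, (r x - 1) ^ 2 ∂Q with hχ
  set c : ℝ := 1 + χ with hcdef
  have hχ_nonneg : 0 ≤ χ := integral_nonneg fun x => sq_nonneg _
  have hc1 : 1 ≤ c := by linarith
  have hc_pos : 0 < c := by linarith
  have h_int_lin : ∫ x, (2 * r x - 1) ∂Q = 1 := by
    rw [integral_sub (int_r.const_mul 2) (integrable_const 1), integral_const_mul, h_int_r]
    norm_num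
  have h_int_r2 : ∫ x, r x * r x ∂Q = c := by
    have heq : (fun x => r x * r x) = fun x => (r x - 1) ^ 2 + (2 * r x - 1) := by
      funext x; ring
    rw [heq, integral_add int_sq int_lin, h_int_lin]
    rw [hcdef]; ring
  set K : ℝ := ∫ x, r x * Real.log (r x) ∂Q with hK
  set L : ℝ := ∫ x, Real.log (r x) ∂Q with hL
  have h_logP : ∫ x, Real.log ((P.rnDeriv Q x).toReal) ∂P = K := by
    rw [← integral_rnDeriv_smul hPQ (f := fun x => Real.log (r x))]
    simp only [smul_eq_mul]; rfl
  have h_logQP : ∫ x, Real.log ((Q.rnDeriv P x).toReal) ∂Q = -L := by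
    have he : (fun x => Real.log ((Q.rnDeriv P x).toReal))
        =ᵐ[Q] fun x => -Real.log (r x) := by
      filter_upwards [Measure.inv_rnDeriv hQP] with x hx
      have hx' : (Q.rnDeriv P x)⁻¹ = P.rnDeriv Q x := hx
      have h2 : Q.rnDeriv P x = (P.rnDeriv Q x)⁻¹ := by rw [← hx', inv_inv]
      rw [h2, ENNReal.toReal_inv, Real.log_inv]
    rw [integral_congr_ae he, integral_neg]
  -- c < M
  have int_Mr : Integrable (fun x => (M - r x) * r x) Q := by
    have heq : (fun x => (M - r x) * r x) = fun x => M * r x - r x * r x := by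
      funext x; ring
    rw [heq]; exact (int_r.const_mul M).sub int_rsq
  have hMr_nonneg : ∀ᵐ x ∂Q, 0 ≤ (M - r x) * r x := by
    filter_upwards [hub, hr_pos] with x h1 h2; nlinarith
  have h_int_Mr : ∫ x, (M - r x) * r x ∂Q = M - c := by
    have heq : (fun x => (M - r x) * r x) = fun x => M * r x - r x * r x := by
      funext x; ring
    rw [heq, integral_sub (int_r.const_mul M) int_rsq, integral_const_mul, h_int_r, h_int_r2]
    ring
  have hcM : c < M := by
    rcases lt_or_ge c M with h | h
    · exact h
    exfalso
    have h0 : ∫ x, (M - r x) * r x ∂Q = 0 :=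
      le_antisymm (by rw [h_int_Mr]; linarith) (integral_nonneg_of_ae hMr_nonneg)
    have hz := (integral_eq_zero_iff_of_nonneg_ae hMr_nonneg int_Mr).mp h0
    have hrM : r =ᵐ[Q] fun _ => M := by
      filter_upwards [hz, hr_pos] with x h1 h2
      have h1' : (M - r x) * r x = 0 := h1
      rcases mul_eq_zero.mp h1' with h' | h'
      · show r x = M; linarith
      · show r x = M; linarith
    have hint : ∫ x, r x ∂Q = M := by
      rw [integral_congr_ae hrM]; simp
    rw [h_int_r] at hint
    linarith
  -- lower bound : ∫ (r - m) log r ≤ log c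
  have key_low : ∫ x, (r x - m) * Real.log (r x) ∂Q ≤ Real.log c := by
    set a₁ : ℝ := (c - m) / (1 - m) with ha₁def
    have ha₁_pos : 0 < a₁ := div_pos (by linarith) (by linarith)
    have hW : ∫ x, (r x - m) ∂Q = 1 - m := by
      rw [integral_sub int_r (integrable_const m), h_int_r]; simp
    have hWr : ∫ x, (r x - m) * r x ∂Q = c - m := by
      have heq : (fun x => (r x - m) * r x) = fun x => r x * r x - m * r x := by
        funext x; ring
      rw [heq, integral_sub int_rsq (int_r.const_mul m), integral_const_mul, h_int_r, h_int_r2]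
      ring
    have int_w : Integrable (fun x => r x - m) Q := int_r.sub (integrable_const m)
    have int_wr : Integrable (fun x => (r x - m) * r x) Q := by
      have heq : (fun x => (r x - m) * r x) = fun x => r x * r x - m * r x := by
        funext x; ring
      rw [heq]; exact int_rsq.sub (int_r.const_mul m)
    have int_wlog : Integrable (fun x => (r x - m) * Real.log (r x)) Q := by
      have heq : (fun x => (r x - m) * Real.log (r x))
          = fun x => r x * Real.log (r x) - m * Real.log (r x) := by funext x; ring
      rw [heq]; exact int_rlogr.sub (int_logr.const_mul m)
    have hA : ∫ x, (r x - m) * r x ∂Q = a₁ * ∫ x, (r x - m) ∂Q := by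
      rw [hWr, hW, ha₁def, div_mul_cancel₀ _ h1m]
    have htan := weightedLogLe ha₁_pos (by filter_upwards [hlb] with x hx; linarith)
      hr_pos int_w int_wr int_wlog hA
    rw [hW] at htan
    have hgm := Real.geom_mean_le_arith_mean2_weighted hm_pos.le
      (by linarith : (0:ℝ) ≤ 1 - m) zero_le_one ha₁_pos.le (by ring)
    have hsum : m * 1 + (1 - m) * a₁ = c := by
      rw [ha₁def, mul_div_cancel₀ _ h1m]; ring
    have hle : a₁ ^ (1 - m) ≤ c := by
      rw [hsum] at hgm
      simpa using hgm
    have hlog1 : (1 - m) * Real.log a₁ ≤ Real.log c := by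
      rw [← Real.log_rpow ha₁_pos]
      exact Real.log_le_log (Real.rpow_pos_of_pos ha₁_pos _) hle
    linarith
  -- upper bound : ∫ (M - r) log r ≤ - log c
  have key_up : ∫ x, (M - r x) * Real.log (r x) ∂Q ≤ -Real.log c := by
    set a₂ : ℝ := (M - c) / (M - 1) with ha₂def
    have ha₂_pos : 0 < a₂ := div_pos (by linarith) (by linarith)
    have hW : ∫ x, (M - r x) ∂Q = M - 1 := by
      rw [integral_sub (integrable_const M) int_r, h_int_r]; simp
    have int_w : Integrable (fun x => M - r x) Q := (integrable_const M).sub int_r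
    have int_wlog : Integrable (fun x => (M - r x) * Real.log (r x)) Q := by
      have heq : (fun x => (M - r x) * Real.log (r x))
          = fun x => M * Real.log (r x) - r x * Real.log (r x) := by funext x; ring
      rw [heq]; exact (int_logr.const_mul M).sub int_rlogr
    have hA : ∫ x, (M - r x) * r x ∂Q = a₂ * ∫ x, (M - r x) ∂Q := by
      rw [h_int_Mr, hW, ha₂def, div_mul_cancel₀ _ hM1]
    have htan := weightedLogLe ha₂_pos (by filter_upwards [hub] with x hx; linarith)
      hr_pos int_w int_Mr int_wlog hA
    rw [hW] at htan
    have hMinv : M⁻¹ ≤ 1 := by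
      rw [inv_le_one_iff₀]; right; exact hM_gt1.le
    have hgm := Real.geom_mean_le_arith_mean2_weighted
      (by positivity : (0:ℝ) ≤ M⁻¹) (by linarith : (0:ℝ) ≤ 1 - M⁻¹)
      hc_pos.le ha₂_pos.le (by ring)
    have hsum : M⁻¹ * c + (1 - M⁻¹) * a₂ = 1 := by
      rw [ha₂def]; field_simp; ring
    rw [hsum] at hgm
    have hlog0 : Real.log (c ^ M⁻¹ * a₂ ^ (1 - M⁻¹)) ≤ 0 :=
      Real.log_nonpos (by positivity) hgm
    rw [Real.log_mul (by positivity) (by positivity), Real.log_rpow hc_pos,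
      Real.log_rpow ha₂_pos] at hlog0
    have hMul := mul_le_mul_of_nonneg_left hlog0 hM_pos.le
    have hexp : M * (M⁻¹ * Real.log c + (1 - M⁻¹) * Real.log a₂)
        = Real.log c + (M - 1) * Real.log a₂ := by
      field_simp
    rw [mul_zero, hexp] at hMul
    linarith
  -- assemble
  have hsplit_low : ∫ x, (r x - m) * Real.log (r x) ∂Q = K - m * L := by
    have heq : (fun x => (r x - m) * Real.log (r x))
        = fun x => r x * Real.log (r x) - m * Real.log (r x) := by funext x; ring
    rw [heq, integral_sub int_rlogr (int_logr.const_mul m), integral_const_mul]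
  have hsplit_up : ∫ x, (M - r x) * Real.log (r x) ∂Q = M * L - K := by
    have heq : (fun x => (M - r x) * Real.log (r x))
        = fun x => M * Real.log (r x) - r x * Real.log (r x) := by funext x; ring
    rw [heq, integral_sub (int_logr.const_mul M) int_rlogr, integral_const_mul]
  rw [hsplit_low] at key_low
  rw [hsplit_up] at key_up
  rw [h_logQP, h_logP]
  constructor
  · linarith
  · linarith
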